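/- Suppose L < 0 and F admits an MMR expansion with data (Δ, (P^{(j)})_{j≥1}). Then for every j ≥ 1: the coefficient of x^r in P^{(j)} vanishes for all r < −2dj, and the coefficient of x^{−2dj} in P^{(j)} equals (−1)^j·C(−L+j−1, j), which is nonzero; hence the minimal x-degree of P^{(j)} is exactly −2dj with leading coefficient (−1)^j·C(−L+j−1, j). -/

import Mathlib

/-- The unit `a + h` of the power series ring `K[[h]]`, for `a ≠ 0`. -/
noncomputable def substUnit (K : Type*) [Field K] (a : K) (ha : a ≠ 0) : (PowerSeries K)ˣ :=
  Units.mkOfMulEqOne (PowerSeries.C a + PowerSeries.X)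
    (PowerSeries.C a + PowerSeries.X)⁻¹
    (PowerSeries.mul_inv_cancel _ (by simp [ha]))

/-- Substitution of the unit `U` (e.g. `1 + h` or `ω + h`) for `q` in a Laurent
polynomial `f ∈ ℤ[q,q⁻¹]`, represented by its finitely supported coefficient function
`f : ℤ →₀ ℤ`; the result `f(U) = ∑_a f_a · U^a` lies in `K[[h]]`. -/
noncomputable def lsubst {K : Type*} [Field K] (U : (PowerSeries K)ˣ) (f : ℤ →₀ ℤ) :
    PowerSeries K :=
  ∑ a ∈ f.support, ((f a : ℤ) : PowerSeries K) * ((U ^ a : (PowerSeries K)ˣ) : PowerSeries K)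

/-- The formal Laurent series `∑_{n ≥ d} c_n xⁿ ∈ K((x))`. -/
noncomputable def seriesOf {K : Type*} [Field K] (d : ℤ) (c : ℤ → K) : LaurentSeries K :=
  HahnSeries.single d 1 * HahnSeries.ofPowerSeries ℤ K (PowerSeries.mk fun i => c (d + i))

/-- A Laurent polynomial over `K`, represented by its finitely supported coefficient
function `g : ℤ →₀ K`, viewed inside the field of formal Laurent series `K((x))`. -/
noncomputable def finsuppToLS {K : Type*} [Zero K] (g : ℤ →₀ K) : LaurentSeries K :=
  { coeff := ⇑g, isPWO_support' := g.finite_support.isPWO }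

/-- A Laurent polynomial with integer coefficients, viewed inside `ℚ((x))`. -/
noncomputable def intLaurentToLS (g : ℤ →₀ ℤ) : LaurentSeries ℚ :=
  finsuppToLS (g.mapRange (fun a : ℤ => (a : ℚ)) (by simp))

/-- `F` (given by its Laurent-polynomial coefficients `f n ∈ ℤ[q,q⁻¹]`, supported in
degrees `n ≥ d`) admits an MMR expansion with data `(Δ, P)`: for every `j ≥ 0`, the
Laurent series `∑_{n ≥ d} ([h^j] f_n(1+h)) xⁿ` equals `P^{(j)}(x)/Δ(x)^{2j+1}` in
`ℚ((x))`, where `P⁰ = 1`. -/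
def HasMMRExpansion (d : ℤ) (f : ℤ → (ℤ →₀ ℤ)) (Δ : ℤ →₀ ℤ) (P : ℕ → (ℤ →₀ ℚ)) : Prop :=
  Δ ≠ 0 ∧ P 0 = Finsupp.single 0 1 ∧
  ∀ j : ℕ,
    seriesOf d (fun r =>
        PowerSeries.coeff j (lsubst (substUnit ℚ 1 one_ne_zero) (f r))) =
      finsuppToLS (P j) / (intLaurentToLS Δ) ^ (2 * j + 1)

open PowerSeries HahnSeries in
lemma ofPS_coeff_neg {K : Type*} [Semiring K] (x : PowerSeries K) {n : ℤ} (hn : n < 0) :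
    (HahnSeries.ofPowerSeries ℤ K x).coeff n = 0 := by
  rw [ofPowerSeries_apply]
  apply embDomain_notin_range
  rintro ⟨m, hm⟩
  have hm' : (m : ℤ) = n := hm
  omega

lemma finsuppToLS_coeff {K : Type*} [Zero K] (g : ℤ →₀ K) (a : ℤ) :
    (finsuppToLS g).coeff a = g a := rfl

lemma lsubst_single {K : Type*} [Field K] (U : (PowerSeries K)ˣ) (L : ℤ) :
    lsubst U (Finsupp.single L 1) = ((U ^ L : (PowerSeries K)ˣ) : PowerSeries K) := by
  rw [lsubst, Finsupp.support_single_ne_zero _ one_ne_zero]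
  simp

lemma constCoeff_substUnit_zpow (a : ℤ) :
    PowerSeries.constantCoeff
      ((substUnit ℚ 1 one_ne_zero ^ a : (PowerSeries ℚ)ˣ) : PowerSeries ℚ) = 1 := by
  have h : PowerSeries.constantCoeff
      ((substUnit ℚ 1 one_ne_zero ^ a : (PowerSeries ℚ)ˣ) : PowerSeries ℚ)
      = ((Units.map (PowerSeries.constantCoeff (R := ℚ)).toMonoidHom
          (substUnit ℚ 1 one_ne_zero ^ a) : ℚˣ) : ℚ) := rfl
  rw [h, map_zpow]
  have h2 : Units.map (PowerSeries.constantCoeff (R := ℚ)).toMonoidHom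
      (substUnit ℚ 1 one_ne_zero) = 1 := by
    ext
    simp [substUnit]
  rw [h2, one_zpow, Units.val_one]

open PowerSeries in
lemma substUnit_val :
    ((substUnit ℚ 1 one_ne_zero : (PowerSeries ℚ)ˣ) : PowerSeries ℚ) = 1 + X := by
  simp [substUnit]

open PowerSeries in
lemma rescale_neg_one_one_sub : rescale (-1 : ℚ) (1 - X) = 1 + X := by
  rw [map_sub, map_one, rescale_neg_one_X, sub_neg_eq_add]

open PowerSeries in
lemma coeff_substUnit_zpow_neg (L : ℤ) (hL : L < 0) (j : ℕ) :
    PowerSeries.coeff j ((substUnit ℚ 1 one_ne_zero ^ L : (PowerSeries ℚ)ˣ) : PowerSeries ℚ)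
      = (-1 : ℚ) ^ j * ((-L + j - 1).toNat.choose j) := by
  set m := (-L).toNat with hm
  have hm1 : 1 ≤ m := by omega
  have hLm : L = -(m : ℤ) := by omega
  set U := substUnit ℚ 1 one_ne_zero with hU
  have hpow : U ^ L = (U ^ m)⁻¹ := by rw [hLm, zpow_neg, zpow_natCast]
  have hval : ((U ^ m : (PowerSeries ℚ)ˣ) : PowerSeries ℚ) = (1 + X) ^ m := by
    rw [Units.val_pow_eq_pow_val, substUnit_val]
  set V := rescale (-1 : ℚ) ((invOneSubPow ℚ m).val) with hV
  have h1 : ((1 : ℚ⟦X⟧) - X) ^ m * (invOneSubPow ℚ m).val = 1 := by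
    have h := (invOneSubPow ℚ m).inv_val
    rwa [invOneSubPow_inv_eq_one_sub_pow] at h
  have h3 : (1 + X : ℚ⟦X⟧) ^ m * V = 1 := by
    rw [hV, ← rescale_neg_one_one_sub, ← map_pow, ← map_mul, h1, map_one]
  have hne : ((1 + X : ℚ⟦X⟧)) ^ m ≠ 0 := by
    apply pow_ne_zero
    intro h
    have h' := congrArg (constantCoeff (R := ℚ)) h
    simp at h'
  have h4 : ((U ^ L : (PowerSeries ℚ)ˣ) : PowerSeries ℚ) = V := by
    apply mul_left_cancel₀ hne
    rw [h3, hpow, ← hval, Units.mul_inv]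
  have h5 := Nat.choose_symm (Nat.le_add_left j (m - 1))
  rw [Nat.add_sub_cancel] at h5
  rw [h4, hV, coeff_rescale, invOneSubPow_val_eq_mk_sub_one_add_choose_of_pos ℚ m hm1,
    coeff_mk]
  have h6 : (-L + (j:ℤ) - 1).toNat = m - 1 + j := by omega
  rw [h6, h5]

/-- If `L < 0` and `F` admits an MMR expansion with data `(Δ, P)`,
then for every `j ≥ 1` the coefficient of `x^r` in `P⁽ʲ⁾` vanishes for `r < -2dj` and
the coefficient of `x^{-2dj}` equals `(-1)^j · C(-L+j-1, j)`, which is nonzero; hence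
the minimal x-degree of `P⁽ʲ⁾` is exactly `-2dj`. -/
theorem mmr_deg_Pj_neg_L (d L : ℤ) (hL : L < 0) (f : ℤ → (ℤ →₀ ℤ))
    (hfsupp : ∀ r : ℤ, r < d → f r = 0) (hfd : f d = Finsupp.single L 1)
    (Δ : ℤ →₀ ℤ) (P : ℕ → (ℤ →₀ ℚ)) (hmmr : HasMMRExpansion d f Δ P) :
    ∀ j : ℕ, 1 ≤ j →
      (∀ r : ℤ, r < -(2 * d * j) → P j r = 0) ∧
      P j (-(2 * d * j)) = ((-1) ^ j * ((-L + j - 1).toNat.choose j) : ℚ) ∧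
      P j (-(2 * d * j)) ≠ 0 := by
  obtain ⟨hΔ, hP0, hH⟩ := hmmr
  set U := substUnit ℚ 1 one_ne_zero with hUdef
  set w : ℕ → PowerSeries ℚ := fun j =>
    PowerSeries.mk fun i => PowerSeries.coeff j (lsubst U (f (d + i))) with hw
  have hseries : ∀ j : ℕ, seriesOf d (fun r => PowerSeries.coeff j (lsubst U (f r)))
      = HahnSeries.single d (1:ℚ) * HahnSeries.ofPowerSeries ℤ ℚ (w j) := fun j => rfl
  have hwcc : ∀ j : ℕ, PowerSeries.constantCoeff (w j)
      = PowerSeries.coeff j ((U ^ L : (PowerSeries ℚ)ˣ) : PowerSeries ℚ) := by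
    intro j
    rw [← PowerSeries.coeff_zero_eq_constantCoeff]
    simp only [hw, PowerSeries.coeff_mk, Nat.cast_zero, add_zero, hfd, lsubst_single]
  have hu0 : PowerSeries.constantCoeff (w 0) = 1 := by
    rw [hwcc 0, PowerSeries.coeff_zero_eq_constantCoeff, constCoeff_substUnit_zpow]
  set D := intLaurentToLS Δ with hDdef
  have hD : D ≠ 0 := by
    intro h
    obtain ⟨a, ha⟩ := Finsupp.ne_iff.mp hΔ
    simp only [Finsupp.coe_zero, Pi.zero_apply] at ha
    have hc : D.coeff a = (Δ a : ℚ) := by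
      simp [hDdef, intLaurentToLS, finsuppToLS_coeff, Finsupp.mapRange_apply]
    rw [h, HahnSeries.coeff_zero] at hc
    exact ha (by exact_mod_cast hc.symm)
  have hP0' : finsuppToLS (P 0) = 1 := by
    rw [hP0]
    refine HahnSeries.ext (funext fun a => ?_)
    rw [finsuppToLS_coeff, HahnSeries.coeff_one, Finsupp.single_apply]
    by_cases h : a = 0
    · rw [if_pos h, if_pos h.symm]
    · rw [if_neg h, if_neg (fun hh => h hh.symm)]
  have h0 := hH 0
  rw [hseries 0, hP0'] at h0
  have hA : (HahnSeries.single d (1:ℚ) * HahnSeries.ofPowerSeries ℤ ℚ (w 0)) * D = 1 := by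
    rw [h0]
    rw [show 2 * 0 + 1 = 1 from rfl, pow_one, one_div, inv_mul_cancel₀ hD]
  have hB : (HahnSeries.single d (1:ℚ) * HahnSeries.ofPowerSeries ℤ ℚ (w 0)) *
      (HahnSeries.single (-d) (1:ℚ) * HahnSeries.ofPowerSeries ℤ ℚ (w 0)⁻¹) = 1 := by
    rw [mul_mul_mul_comm, HahnSeries.single_mul_single, add_neg_cancel, mul_one,
      HahnSeries.single_zero_one, ← map_mul,
      PowerSeries.mul_inv_cancel _ (by rw [hu0]; exact one_ne_zero), map_one, one_mul]
  have hAne : (HahnSeries.single d (1:ℚ) * HahnSeries.ofPowerSeries ℤ ℚ (w 0)) ≠ 0 :=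
    left_ne_zero_of_mul_eq_one hA
  have hDB : D = HahnSeries.single (-d) (1:ℚ) * HahnSeries.ofPowerSeries ℤ ℚ (w 0)⁻¹ :=
    mul_left_cancel₀ hAne (hA.trans hB.symm)
  intro j hj
  have hHj := hH j
  rw [hseries j, eq_div_iff (pow_ne_zero _ hD)] at hHj
  set k := 2 * j + 1 with hk
  have he : HahnSeries.single d (1:ℚ) * (HahnSeries.single (-d) (1:ℚ)) ^ k
      = HahnSeries.single (-(2*d*(j:ℤ))) (1:ℚ) := by
    rw [HahnSeries.single_pow, HahnSeries.single_mul_single, one_pow, mul_one]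
    congr 1
    rw [nsmul_eq_mul]
    push_cast [hk]
    ring
  have hG : finsuppToLS (P j) = HahnSeries.single (-(2*d*(j:ℤ))) (1:ℚ) *
      HahnSeries.ofPowerSeries ℤ ℚ (w j * ((w 0)⁻¹) ^ k) := by
    rw [← hHj, hDB, mul_pow, mul_mul_mul_comm, he, ← map_pow, ← map_mul]
  have hcoeff : ∀ r : ℤ, (P j) r =
      (HahnSeries.ofPowerSeries ℤ ℚ (w j * ((w 0)⁻¹) ^ k)).coeff (r - (-(2*d*(j:ℤ)))) := by
    intro r
    have h1 : (P j) r = (finsuppToLS (P j)).coeff r := rfl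
    rw [h1, hG]
    have h2 := HahnSeries.coeff_single_mul_add (r := (1:ℚ))
      (x := HahnSeries.ofPowerSeries ℤ ℚ (w j * ((w 0)⁻¹) ^ k))
      (a := r - (-(2*d*(j:ℤ)))) (b := -(2*d*(j:ℤ)))
    rw [sub_add_cancel] at h2
    rw [h2, one_mul]
  have hconst : PowerSeries.coeff 0 (w j * ((w 0)⁻¹) ^ k)
      = ((-1 : ℚ) ^ j * ((-L + j - 1).toNat.choose j)) := by
    rw [PowerSeries.coeff_zero_eq_constantCoeff, map_mul, map_pow,
      PowerSeries.constantCoeff_inv, hu0, inv_one, one_pow, mul_one, hwcc j,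
      coeff_substUnit_zpow_neg L hL j]
  have hval : P j (-(2 * d * (j:ℤ))) = ((-1 : ℚ) ^ j * ((-L + j - 1).toNat.choose j)) := by
    rw [hcoeff, sub_self]
    have h3 : ((0:ℕ) : ℤ) = (0 : ℤ) := rfl
    rw [← h3, HahnSeries.ofPowerSeries_apply_coeff, hconst]
  refine ⟨fun r hr => ?_, hval, ?_⟩
  · rw [hcoeff]
    exact ofPS_coeff_neg _ (by omega)
  · rw [hval]
    have hch : 0 < ((-L + j - 1).toNat.choose j) :=
      Nat.choose_pos (by omega)
    positivity
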